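/- Let k ≥ 2 be an integer and let γ > 0, t_delay ≥ 0, C_k > 0, and T_k > 0 be reals with t_delay < T_k. Let T_1, …, T_{k−1} and C_1, …, C_{k−1} be positive reals with T_i < T_k for all i, and set U_i = C_i/T_i. If ((C_k + γ·t_delay)/(γ·T_k) + 1)·∏_{i=1}^{k−1}(U_i/γ + 1) ≤ 2, then there exists t with 0 < t ≤ T_k such that C_k + Σ_{i=1}^{k−1} ⌈t/T_i⌉·C_i ≤ max{0, γ·(t − t_delay)}. -/

import Mathlib

open Finset

lemma ceil_le_mul_ceil (t Tp : ℝ) (hT : 0 < Tp) (m : ℤ) (hm : 1 ≤ m) :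
    ⌈t / Tp⌉ ≤ m * ⌈t / ((m : ℝ) * Tp)⌉ := by
  rw [Int.ceil_le]
  have hm0 : (1 : ℝ) ≤ (m : ℝ) := by exact_mod_cast hm
  have h1 : t / ((m : ℝ) * Tp) ≤ (⌈t / ((m : ℝ) * Tp)⌉ : ℝ) := Int.le_ceil _
  have h2 : t / Tp = (m : ℝ) * (t / ((m : ℝ) * Tp)) := by field_simp
  rw [h2]
  push_cast
  exact mul_le_mul_of_nonneg_left h1 (by linarith)

lemma hyp_key (Tv Cv : ℕ → ℝ) : ∀ (n : ℕ) (S : Finset ℕ) (c : ℝ), S.card = n → 0 < c →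
    (∀ i ∈ S, 0 < Tv i) → (∀ i ∈ S, 0 < Cv i) →
    (∀ j ∈ S, Tv j < c + ∑ i ∈ S, (if Tv j ≤ Tv i then 1 else 2) * Cv i) →
    (c + 2 * ∑ i ∈ S, Cv i) / (c + ∑ i ∈ S, Cv i) ≤ ∏ i ∈ S, (Cv i / Tv i + 1) := by
  intro n
  induction n with
  | zero =>
      intro S c hcard hc _ _ _
      rw [Finset.card_eq_zero] at hcard
      subst hcard
      simp [div_self hc.ne']
  | succ n ih =>
      intro S c hcard hc hT hC hfail
      have hne : S.Nonempty := by rw [← Finset.card_pos, hcard]; omega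
      obtain ⟨j, hjS, hjmin⟩ := S.exists_min_image Tv hne
      have hcard' : (S.erase j).card = n := by
        rw [Finset.card_erase_of_mem hjS, hcard]; omega
      have hTj := hT j hjS
      have hCj := hC j hjS
      -- sums
      have hsum : ∑ i ∈ S, Cv i = Cv j + ∑ i ∈ S.erase j, Cv i :=
        (Finset.add_sum_erase S Cv hjS).symm
      have hSgnn : 0 ≤ ∑ i ∈ S.erase j, Cv i :=
        Finset.sum_nonneg fun i hi => (hC i (Finset.mem_of_mem_erase hi)).le
      set Sg := ∑ i ∈ S.erase j, Cv i with hSgdef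
      have hc' : 0 < c + 2 * Cv j := by linarith
      -- failure transfer to erased set
      have hfail' : ∀ j' ∈ S.erase j, Tv j' < (c + 2 * Cv j) +
          ∑ i ∈ S.erase j, (if Tv j' ≤ Tv i then 1 else 2) * Cv i := by
        intro j' hj'
        have hj'S := Finset.mem_of_mem_erase hj'
        have h0 := hfail j' hj'S
        have hdec : ∑ i ∈ S, (if Tv j' ≤ Tv i then 1 else 2) * Cv i
            = (if Tv j' ≤ Tv j then 1 else 2) * Cv j +
              ∑ i ∈ S.erase j, (if Tv j' ≤ Tv i then 1 else 2) * Cv i :=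
          (Finset.add_sum_erase S _ hjS).symm
        rw [hdec] at h0
        have hcoef : (if Tv j' ≤ Tv j then 1 else 2) * Cv j ≤ 2 * Cv j := by
          split <;> nlinarith
        linarith
      have IH := ih (S.erase j) (c + 2 * Cv j) hcard' hc'
        (fun i hi => hT i (Finset.mem_of_mem_erase hi))
        (fun i hi => hC i (Finset.mem_of_mem_erase hi)) hfail'
      -- Tv j < c + ∑ Cv
      have hTjs : Tv j < c + ∑ i ∈ S, Cv i := by
        have h0 := hfail j hjS
        have : ∑ i ∈ S, (if Tv j ≤ Tv i then 1 else 2) * Cv i = ∑ i ∈ S, Cv i := by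
          refine Finset.sum_congr rfl fun i hi => ?_
          rw [if_pos (hjmin i hi), one_mul]
        rwa [this] at h0
      set s : ℝ := c + ∑ i ∈ S, Cv i with hsdef
      have hspos : 0 < s := by rw [hsdef, hsum]; nlinarith
      -- rewrite IH
      have hIH2 : (c + 2 * ∑ i ∈ S, Cv i) / (s + Cv j) ≤ ∏ i ∈ S.erase j, (Cv i / Tv i + 1) := by
        have e1 : (c + 2 * Cv j) + 2 * Sg = c + 2 * ∑ i ∈ S, Cv i := by
          rw [hsum]; ring
        have e2 : (c + 2 * Cv j) + Sg = s + Cv j := by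
          rw [hsdef, hsum]; ring
        rwa [e1, e2] at IH
      have hprod : ∏ i ∈ S, (Cv i / Tv i + 1)
          = (Cv j / Tv j + 1) * ∏ i ∈ S.erase j, (Cv i / Tv i + 1) :=
        (Finset.mul_prod_erase S _ hjS).symm
      rw [hprod]
      have hfac : (s + Cv j) / s ≤ Cv j / Tv j + 1 := by
        rw [div_le_iff₀ hspos]
        have : Cv j / Tv j + 1 = (Cv j + Tv j) / Tv j := by field_simp
        rw [this, div_mul_eq_mul_div, le_div_iff₀ hTj]
        nlinarith
      have hnum : 0 < c + 2 * ∑ i ∈ S, Cv i := by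
        rw [hsum]; nlinarith
      calc (c + 2 * ∑ i ∈ S, Cv i) / s
          = ((s + Cv j) / s) * ((c + 2 * ∑ i ∈ S, Cv i) / (s + Cv j)) := by
            field_simp
        _ ≤ (Cv j / Tv j + 1) * ∏ i ∈ S.erase j, (Cv i / Tv i + 1) := by
            apply mul_le_mul hfac hIH2 (by positivity)
            have : 0 < (s + Cv j) / s := by positivity
            linarith [hfac]

theorem bounded_delay_rm_test
    (k : ℕ) (hk : 2 ≤ k) (γ tdelay Ck Tk : ℝ)
    (hγ : 0 < γ) (hdelay : 0 ≤ tdelay) (hCk : 0 < Ck) (hTk : 0 < Tk)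
    (hdT : tdelay < Tk)
    (T C U : ℕ → ℝ)
    (hT : ∀ i ∈ Finset.Icc 1 (k - 1), 0 < T i)
    (hC : ∀ i ∈ Finset.Icc 1 (k - 1), 0 < C i)
    (hU : ∀ i ∈ Finset.Icc 1 (k - 1), U i = C i / T i)
    (hRM : ∀ i ∈ Finset.Icc 1 (k - 1), T i < Tk)
    (hcond : ((Ck + γ * tdelay) / (γ * Tk) + 1)
        * ∏ i ∈ Finset.Icc 1 (k - 1), (U i / γ + 1) ≤ 2) :
    ∃ t : ℝ, 0 < t ∧ t ≤ Tk ∧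
      Ck + ∑ i ∈ Finset.Icc 1 (k - 1), (⌈t / T i⌉ : ℝ) * C i
        ≤ max 0 (γ * (t - tdelay)) := by
  by_contra hcon
  push_neg at hcon
  set S := Finset.Icc 1 (k - 1) with hSdef
  set c := (Ck + γ * tdelay) / γ with hcdef
  have hc : 0 < c := div_pos (by nlinarith) hγ
  -- normalized failure
  have hfail0 : ∀ t : ℝ, 0 < t → t ≤ Tk →
      t < c + ∑ i ∈ S, (⌈t / T i⌉ : ℝ) * (C i / γ) := by
    intro t ht htk
    have h1 := hcon t ht htk
    have h2 : γ * (t - tdelay) < Ck + ∑ i ∈ S, (⌈t / T i⌉ : ℝ) * C i :=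
      lt_of_le_of_lt (le_max_right 0 _) h1
    have h3 : ∑ i ∈ S, (⌈t / T i⌉ : ℝ) * (C i / γ)
        = (∑ i ∈ S, (⌈t / T i⌉ : ℝ) * C i) / γ := by
      rw [Finset.sum_div]
      exact Finset.sum_congr rfl fun i _ => (mul_div_assoc _ _ _).symm
    rw [h3, hcdef, ← add_div, lt_div_iff₀ hγ]
    nlinarith
  -- folding multipliers
  set m : ℕ → ℤ := fun i => max 1 ⌈Tk / (2 * T i)⌉ with hmdef
  have hm1 : ∀ i, 1 ≤ m i := fun i => le_max_left _ _
  have hm1R : ∀ i, (1 : ℝ) ≤ (m i : ℝ) := fun i => by exact_mod_cast hm1 i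
  set T' : ℕ → ℝ := fun i => (m i : ℝ) * T i with hT'def
  set Cv : ℕ → ℝ := fun i => (m i : ℝ) * (C i / γ) with hCvdef
  have hT'pos : ∀ i ∈ S, 0 < T' i := fun i hi =>
    mul_pos (by linarith [hm1R i]) (hT i hi)
  have hCvpos : ∀ i ∈ S, 0 < Cv i := fun i hi =>
    mul_pos (by linarith [hm1R i]) (div_pos (hC i hi) hγ)
  have hhalf : ∀ i ∈ S, Tk / 2 ≤ T' i := by
    intro i hi
    have hTi := hT i hi
    have h1 : Tk / (2 * T i) ≤ (m i : ℝ) := by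
      refine le_trans (Int.le_ceil _) ?_
      exact_mod_cast le_max_right (1 : ℤ) ⌈Tk / (2 * T i)⌉
    have h2 : Tk / (2 * T i) * T i = Tk / 2 := by field_simp
    calc Tk / 2 = Tk / (2 * T i) * T i := h2.symm
      _ ≤ (m i : ℝ) * T i := mul_le_mul_of_nonneg_right h1 hTi.le
  have hT'lt : ∀ i ∈ S, T' i < Tk := by
    intro i hi
    have hTi := hT i hi
    rcases eq_or_lt_of_le (hm1 i) with h1 | h1
    · show (m i : ℝ) * T i < Tk
      rw [← h1]; push_cast; rw [one_mul]; exact hRM i hi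
    · -- m i ≥ 2, so m i = ⌈Tk/(2 T i)⌉ and Tk/(2 T i) > 1
      have hceil : 1 < ⌈Tk / (2 * T i)⌉ := by
        by_contra hcc
        push_neg at hcc
        have : m i = 1 := by rw [hmdef]; simp only []; omega
        omega
      have hm_eq : m i = ⌈Tk / (2 * T i)⌉ := max_eq_right (by omega)
      have hx1 : (1 : ℝ) < Tk / (2 * T i) := by
        have := Int.lt_ceil.mp hceil
        exact_mod_cast this
      have hTi2 : T i < Tk / 2 := by
        rw [lt_div_iff₀ (by positivity : (0:ℝ) < 2 * T i)] at hx1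
        linarith
      have hub : (m i : ℝ) < Tk / (2 * T i) + 1 := by
        rw [hm_eq]; exact Int.ceil_lt_add_one _
      show (m i : ℝ) * T i < Tk
      have h3 : (Tk / (2 * T i) + 1) * T i = Tk / 2 + T i := by field_simp
      calc (m i : ℝ) * T i < (Tk / (2 * T i) + 1) * T i :=
            mul_lt_mul_of_pos_right hub hTi
        _ = Tk / 2 + T i := h3
        _ < Tk := by linarith
  -- pointwise ceiling bound
  have hceilb : ∀ i ∈ S, ∀ t : ℝ, 0 < t → t ≤ Tk →
      (⌈t / T i⌉ : ℝ) * (C i / γ) ≤ (if t ≤ T' i then 1 else 2) * Cv i := by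
    intro i hi t ht htk
    have hTi := hT i hi
    have hCγ : 0 < C i / γ := div_pos (hC i hi) hγ
    have h1 : ⌈t / T i⌉ ≤ m i * ⌈t / T' i⌉ :=
      ceil_le_mul_ceil t (T i) hTi (m i) (hm1 i)
    have hT'p := hT'pos i hi
    split
    case isTrue hle =>
      have h2 : ⌈t / T' i⌉ ≤ 1 := Int.ceil_le.mpr (by
        push_cast; rw [div_le_one hT'p]; exact hle)
      have h3 : ⌈t / T i⌉ ≤ m i := by
        calc ⌈t / T i⌉ ≤ m i * ⌈t / T' i⌉ := h1
          _ ≤ m i * 1 := mul_le_mul_of_nonneg_left h2 (by linarith [hm1 i])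
          _ = m i := mul_one _
      have h3R : (⌈t / T i⌉ : ℝ) ≤ (m i : ℝ) := by exact_mod_cast h3
      rw [one_mul, hCvdef]
      exact mul_le_mul_of_nonneg_right h3R hCγ.le
    case isFalse hle =>
      have h2 : ⌈t / T' i⌉ ≤ 2 := Int.ceil_le.mpr (by
        push_cast; rw [div_le_iff₀ hT'p]
        have := hhalf i hi; linarith)
      have h3 : ⌈t / T i⌉ ≤ 2 * m i := by
        calc ⌈t / T i⌉ ≤ m i * ⌈t / T' i⌉ := h1
          _ ≤ m i * 2 := mul_le_mul_of_nonneg_left h2 (by linarith [hm1 i])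
          _ = 2 * m i := by ring
      have h3R : (⌈t / T i⌉ : ℝ) ≤ 2 * (m i : ℝ) := by exact_mod_cast h3
      rw [hCvdef, ← mul_assoc]
      exact mul_le_mul_of_nonneg_right h3R hCγ.le
  -- failures for the key lemma
  have hkeyfail : ∀ j ∈ S, T' j < c + ∑ i ∈ S, (if T' j ≤ T' i then 1 else 2) * Cv i := by
    intro j hj
    have h0 := hfail0 (T' j) (hT'pos j hj) (hT'lt j hj).le
    refine lt_of_lt_of_le h0 ?_
    exact add_le_add_right (Finset.sum_le_sum fun i hi =>
      hceilb i hi (T' j) (hT'pos j hj) (hT'lt j hj).le) c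
  have Hkey := hyp_key T' Cv S.card S c rfl hc hT'pos hCvpos hkeyfail
  have hprodeq : ∏ i ∈ S, (Cv i / T' i + 1) = ∏ i ∈ S, (U i / γ + 1) := by
    refine Finset.prod_congr rfl fun i hi => ?_
    have hTi := hT i hi
    have hmne : (m i : ℝ) ≠ 0 := by linarith [hm1R i]
    rw [hU i hi, hCvdef, hT'def]
    congr 1
    field_simp
  -- failure at Tk
  have hTkfail : Tk < c + 2 * ∑ i ∈ S, Cv i := by
    have h0 := hfail0 Tk hTk le_rfl
    refine lt_of_lt_of_le h0 ?_
    have hsum : ∑ i ∈ S, (⌈Tk / T i⌉ : ℝ) * (C i / γ) ≤ ∑ i ∈ S, 2 * Cv i := by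
      refine Finset.sum_le_sum fun i hi => ?_
      have h := hceilb i hi Tk hTk le_rfl
      have hT'Tk := hT'lt i hi
      rw [if_neg (by linarith)] at h
      exact h
    rw [Finset.mul_sum]
    linarith
  -- final contradiction
  have hSg2nn : 0 ≤ ∑ i ∈ S, Cv i := Finset.sum_nonneg fun i hi => (hCvpos i hi).le
  set Sg2 := ∑ i ∈ S, Cv i with hSg2def
  have hs : 0 < c + Sg2 := by linarith
  have h2lt : 2 < (c / Tk + 1) * ((c + 2 * Sg2) / (c + Sg2)) := by
    rw [show c / Tk + 1 = (c + Tk) / Tk by field_simp, div_mul_div_comm,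
      lt_div_iff₀ (by positivity)]
    nlinarith [mul_lt_mul_of_pos_left hTkfail hc]
  have hchain : (c / Tk + 1) * ((c + 2 * Sg2) / (c + Sg2)) ≤ (c / Tk + 1) * ∏ i ∈ S, (U i / γ + 1) := by
    apply mul_le_mul_of_nonneg_left _ (by positivity)
    rw [← hprodeq]
    exact Hkey
  have hceq : (Ck + γ * tdelay) / (γ * Tk) = c / Tk := by
    rw [hcdef, div_div]
  rw [hceq] at hcond
  linarith
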